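/- arXiv:math/0201104 — 2 statements merged into one kernel-verified Lean document; each statement's English description precedes it below -/
import Mathlib

section
/- If the triple (A, B_•, C_•) lies in the orbit F_{M,Δ} for a decorated matrix (M,Δ), then for all (i,j) ∈ [0,q]×[0,r] one has dim(B_i ∩ C_j) = r_{ij}(M) and dim(B_i ∩ C_j) + dim(A ∩ (B_i + C_j)) = r_{ij}(M) + δ_{ij}(Δ). -/
open Finset

namespace TwoFlagsLine

/-- Rank numbers `r_{ij}(M) = Σ_{k ≤ i, l ≤ j} m_{kl}` (1-based; zero if `i = 0` or `j = 0`). -/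
def rk (m : ℕ → ℕ → ℕ) (i j : ℕ) : ℕ :=
  ∑ k ∈ Finset.Icc 1 i, ∑ l ∈ Finset.Icc 1 j, m k l

/-- `b` is a composition of `n` with `q` parts `b 1, …, b q`. -/
def IsComposition (n q : ℕ) (b : ℕ → ℕ) : Prop :=
  (∀ i ∈ Finset.Icc 1 q, 0 < b i) ∧ ∑ i ∈ Finset.Icc 1 q, b i = n

/-- `m` is a `q × r` transport matrix for the compositions `b`, `c`. -/
def IsTransport (q r : ℕ) (b c : ℕ → ℕ) (m : ℕ → ℕ → ℕ) : Prop :=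
  (∀ i j : ℕ, i ∉ Finset.Icc 1 q ∨ j ∉ Finset.Icc 1 r → m i j = 0) ∧
  (∀ i ∈ Finset.Icc 1 q, ∑ j ∈ Finset.Icc 1 r, m i j = b i) ∧
  (∀ j ∈ Finset.Icc 1 r, ∑ i ∈ Finset.Icc 1 q, m i j = c j)

/-- `Δ` is a decoration of the matrix `m`. -/
def IsDecoration (q r : ℕ) (m : ℕ → ℕ → ℕ) (Δ : Finset (ℕ × ℕ)) : Prop :=
  Δ.Nonempty ∧
  (∀ p ∈ Δ, 1 ≤ p.1 ∧ p.1 ≤ q ∧ 1 ≤ p.2 ∧ p.2 ≤ r ∧ 0 < m p.1 p.2) ∧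
  (∀ p ∈ Δ, ∀ p' ∈ Δ, p ≠ p' → (p.1 < p'.1 ∧ p'.2 < p.2) ∨ (p'.1 < p.1 ∧ p.2 < p'.2))

/-- `δ_{ij}(Δ) = 1` if every `(k,l) ∈ Δ` has `k ≤ i` or `l ≤ j`, else `0`. -/
def deltaNum (Δ : Finset (ℕ × ℕ)) (i j : ℕ) : ℕ :=
  if ∀ p ∈ Δ, p.1 ≤ i ∨ p.2 ≤ j then 1 else 0

/-- `[S]` : the set of `≤`-maximal elements of `S`. -/
def maxl (S : Finset (ℕ × ℕ)) : Finset (ℕ × ℕ) :=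
  S.filter fun p => ∀ p' ∈ S, p ≤ p' → p = p'

/-- The index set `{(i,j,k) : (i,j) ∈ [1,q] × [1,r], 1 ≤ k ≤ m i j}` for a basis
adapted to the transport matrix `m`. -/
def Idx (q r : ℕ) (m : ℕ → ℕ → ℕ) : Set (ℕ × ℕ × ℕ) :=
  {p | 1 ≤ p.1 ∧ p.1 ≤ q ∧ 1 ≤ p.2.1 ∧ p.2.1 ≤ r ∧ 1 ≤ p.2.2 ∧ p.2.2 ≤ m p.1 p.2.1}

variable (k V : Type*) [Field k] [AddCommGroup V] [Module k V]

/-- The family `v`, restricted to the index set of the transport matrix `m`,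
is a basis of `V` indexed by `m`. -/
def IsMBasis (q r : ℕ) (m : ℕ → ℕ → ℕ) (v : ℕ × ℕ × ℕ → V) : Prop :=
  LinearIndependent k (fun x : Idx q r m => v x.1) ∧
  Submodule.span k (v '' Idx q r m) = ⊤

/-- `(B, C)` lies in the orbit `F_M`: for some basis `v` indexed by `M`,
`B i = span{v_{i'jk} : i' ≤ i}` and `C j = span{v_{ij'k} : j' ≤ j}`. -/
def InOrbit (q r : ℕ) (m : ℕ → ℕ → ℕ) (B C : ℕ → Submodule k V) : Prop :=
  ∃ v : ℕ × ℕ × ℕ → V, IsMBasis k V q r m v ∧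
    (∀ i ≤ q, B i = Submodule.span k (v '' {p | p ∈ Idx q r m ∧ p.1 ≤ i})) ∧
    (∀ j ≤ r, C j = Submodule.span k (v '' {p | p ∈ Idx q r m ∧ p.2.1 ≤ j}))

/-- `(A, B, C)` lies in the orbit `F_{M,Δ}`: for some basis `v` indexed by `M`,
`B, C` are as in `F_M` and `A = span(Σ_{(i,j) ∈ Δ} v_{ij1})`. -/
def InOrbitDec (q r : ℕ) (m : ℕ → ℕ → ℕ) (Δ : Finset (ℕ × ℕ))
    (A : Submodule k V) (B C : ℕ → Submodule k V) : Prop :=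
  ∃ v : ℕ × ℕ × ℕ → V, IsMBasis k V q r m v ∧
    (∀ i ≤ q, B i = Submodule.span k (v '' {p | p ∈ Idx q r m ∧ p.1 ≤ i})) ∧
    (∀ j ≤ r, C j = Submodule.span k (v '' {p | p ∈ Idx q r m ∧ p.2.1 ≤ j})) ∧
    A = Submodule.span k {∑ p ∈ Δ, v (p.1, p.2, 1)}

/-- `B` is a partial flag `0 = B 0 ⊆ B 1 ⊆ ⋯ ⊆ B q = V` with
`dim (B i / B (i-1)) = b i`. -/
def IsFlag (q : ℕ) (b : ℕ → ℕ) (B : ℕ → Submodule k V) : Prop :=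
  B 0 = ⊥ ∧ B q = ⊤ ∧ (∀ i : ℕ, 1 ≤ i → i ≤ q → B (i - 1) ≤ B i) ∧
  (∀ i : ℕ, 1 ≤ i → i ≤ q →
    Module.finrank k (↥(B i) ⧸ Submodule.comap (B i).subtype (B (i - 1))) = b i)

/-- Intersection of spans of subsets of a basis. -/
lemma span_image_inf {ι k V : Type*} [Field k] [AddCommGroup V] [Module k V]
    (b : Module.Basis ι k V) (s t : Set ι) :
    Submodule.span k (b '' s) ⊓ Submodule.span k (b '' t)
      = Submodule.span k (b '' (s ∩ t)) := by
  ext x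
  simp only [Submodule.mem_inf, Module.Basis.mem_span_image, Set.subset_inter_iff]

/-- Finset of basis indices with first coordinate `≤ i` and second `≤ j`. -/
def idxF (m : ℕ → ℕ → ℕ) (i j : ℕ) : Finset (ℕ × ℕ × ℕ) :=
  (Finset.Icc 1 i ×ˢ Finset.Icc 1 j).biUnion fun p =>
    (Finset.Icc 1 (m p.1 p.2)).image fun t => (p.1, p.2, t)

lemma mem_idxF {m : ℕ → ℕ → ℕ} {i j : ℕ} {x : ℕ × ℕ × ℕ} :
    x ∈ idxF m i j ↔ 1 ≤ x.1 ∧ x.1 ≤ i ∧ 1 ≤ x.2.1 ∧ x.2.1 ≤ j ∧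
      1 ≤ x.2.2 ∧ x.2.2 ≤ m x.1 x.2.1 := by
  obtain ⟨a, l, t⟩ := x
  simp only [idxF, Finset.mem_biUnion, Finset.mem_product, Finset.mem_image,
    Finset.mem_Icc, Prod.mk.injEq]
  constructor
  · rintro ⟨⟨a', l'⟩, ⟨⟨h1, h2⟩, h3, h4⟩, t', ht', rfl, rfl, rfl⟩
    exact ⟨h1, h2, h3, h4, ht'.1, ht'.2⟩
  · rintro ⟨h1, h2, h3, h4, h5, h6⟩
    exact ⟨(a, l), ⟨⟨h1, h2⟩, h3, h4⟩, t, ⟨h5, h6⟩, rfl, rfl, rfl⟩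

lemma card_idxF (m : ℕ → ℕ → ℕ) (i j : ℕ) : (idxF m i j).card = rk m i j := by
  rw [idxF, Finset.card_biUnion]
  · rw [rk, Finset.sum_product]
    refine Finset.sum_congr rfl fun a _ => Finset.sum_congr rfl fun l _ => ?_
    rw [Finset.card_image_of_injective _ (fun t t' h => by
      simpa using congrArg (fun p : ℕ × ℕ × ℕ => p.2.2) h)]
    simp
  · rintro ⟨a, l⟩ _ ⟨a', l'⟩ _ hne
    rw [Function.onFun, Finset.disjoint_left]
    rintro x hx hx'
    simp only [Finset.mem_image] at hx hx'
    obtain ⟨t, _, rfl⟩ := hx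
    obtain ⟨t', _, h⟩ := hx'
    injection h with e1 e'
    injection e' with e2 _
    exact hne (by rw [e1, e2])

lemma coe_idxF {q r : ℕ} (m : ℕ → ℕ → ℕ) {i j : ℕ} (hiq : i ≤ q) (hjr : j ≤ r) :
    (↑(idxF m i j) : Set (ℕ × ℕ × ℕ)) =
      {p | p ∈ Idx q r m ∧ p.1 ≤ i ∧ p.2.1 ≤ j} := by
  ext x
  simp only [Finset.coe_filter, Set.mem_setOf_eq, Finset.mem_coe, mem_idxF, Idx]
  constructor
  · rintro ⟨h1, h2, h3, h4, h5, h6⟩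
    exact ⟨⟨h1, h2.trans hiq, h3, h4.trans hjr, h5, h6⟩, h2, h4⟩
  · rintro ⟨⟨h1, _, h3, _, h5, h6⟩, h2, h4⟩
    exact ⟨h1, h2, h3, h4, h5, h6⟩

/-- if `(A, B, C) ∈ F_{M,Δ}` for a decorated matrix `(M,Δ)`, then for all
`(i,j) ∈ [0,q] × [0,r]`, `dim (B i ∩ C j) = r_{ij}(M)` and
`dim (B i ∩ C j) + dim (A ∩ (B i + C j)) = r_{ij}(M) + δ_{ij}(Δ)`. -/
theorem decorated_orbit_rank (n q r : ℕ) (hn : 0 < n) (hq : 0 < q) (hr : 0 < r)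
    (b c : ℕ → ℕ) (hb : IsComposition n q b) (hc : IsComposition n r c)
    {k V : Type*} [Field k] [Infinite k] [AddCommGroup V] [Module k V]
    [FiniteDimensional k V] (hdim : Module.finrank k V = n)
    (m : ℕ → ℕ → ℕ) (Δ : Finset (ℕ × ℕ))
    (hm : IsTransport q r b c m) (hΔ : IsDecoration q r m Δ)
    (A : Submodule k V) (B C : ℕ → Submodule k V)
    (horb : InOrbitDec k V q r m Δ A B C) :
    ∀ i ≤ q, ∀ j ≤ r,
      Module.finrank k ↥(B i ⊓ C j) = rk m i j ∧
      Module.finrank k ↥(B i ⊓ C j) + Module.finrank k ↥(A ⊓ (B i ⊔ C j)) =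
        rk m i j + deltaNum Δ i j := by
  classical
  obtain ⟨v, ⟨hli, hsp⟩, hB, hC, hA⟩ := horb
  -- the basis
  have hrange : Set.range (fun x : (Idx q r m) => v x.1) = v '' (Idx q r m) :=
    (Set.image_eq_range v (Idx q r m)).symm
  let bas : Module.Basis (Idx q r m) k V := Module.Basis.mk hli (by rw [hrange, hsp])
  have hbas : ∀ x : Idx q r m, bas x = v x.1 := fun x => by
    simp [bas, Module.Basis.coe_mk]
  -- translation between images
  have himg : ∀ S : Set (ℕ × ℕ × ℕ), S ⊆ Idx q r m →
      v '' S = bas '' (Subtype.val ⁻¹' S) := by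
    intro S hS
    ext x
    constructor
    · rintro ⟨s, hs, rfl⟩
      exact ⟨⟨s, hS hs⟩, hs, (hbas ⟨s, hS hs⟩)⟩
    · rintro ⟨⟨s, hsI⟩, hs, rfl⟩
      exact ⟨s, hs, (hbas ⟨s, hsI⟩).symm⟩
  -- Δ indices lie in Idx
  have hIdxΔ : ∀ p ∈ Δ, ((p.1, p.2, 1) : ℕ × ℕ × ℕ) ∈ Idx q r m := by
    intro p hp
    obtain ⟨h1, h2, h3, h4, h5⟩ := hΔ.2.1 p hp
    exact ⟨h1, h2, h3, h4, le_refl 1, h5⟩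
  set w : V := ∑ p ∈ Δ, v (p.1, p.2, 1) with hw
  -- coordinate computation
  have hcoord : ∀ p₀ (hp₀ : p₀ ∈ Δ),
      bas.repr w ⟨(p₀.1, p₀.2, 1), hIdxΔ p₀ hp₀⟩ = 1 := by
    intro p₀ hp₀
    have hw' : w = ∑ p ∈ Δ.attach, bas ⟨((p : ℕ × ℕ).1, (p : ℕ × ℕ).2, 1),
        hIdxΔ p p.2⟩ := by
      rw [hw, ← Finset.sum_attach Δ (fun p => v (p.1, p.2, 1))]
      exact Finset.sum_congr rfl fun p _ =>
        (hbas ⟨((p : ℕ × ℕ).1, (p : ℕ × ℕ).2, 1), hIdxΔ p p.2⟩).symm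
    rw [hw', map_sum, Finsupp.finset_sum_apply]
    have : ∀ p ∈ Δ.attach,
        (bas.repr (bas ⟨((p : ℕ × ℕ).1, (p : ℕ × ℕ).2, 1), hIdxΔ p p.2⟩))
          ⟨(p₀.1, p₀.2, 1), hIdxΔ p₀ hp₀⟩
        = if p = ⟨p₀, hp₀⟩ then (1 : k) else 0 := by
      intro p _
      rw [bas.repr_self, Finsupp.single_apply]
      congr 1
      simp only [eq_iff_iff]
      constructor
      · intro h
        have h' : (((p : ℕ × ℕ).1, (p : ℕ × ℕ).2, 1) : ℕ × ℕ × ℕ)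
            = (p₀.1, p₀.2, 1) := Subtype.ext_iff.1 h
        injection h' with e1 e'
        injection e' with e2 _
        exact Subtype.ext (Prod.ext e1 e2)
      · rintro rfl; rfl
    rw [Finset.sum_congr rfl this, Finset.sum_ite_eq' Δ.attach ⟨p₀, hp₀⟩ fun _ => (1 : k)]
    simp
  have hw0 : w ≠ 0 := by
    obtain ⟨p₀, hp₀⟩ := hΔ.1
    intro h
    have := hcoord p₀ hp₀
    rw [h] at this
    simp at this
  intro i hiq j hjr
  -- the subsets
  set P : Set (ℕ × ℕ × ℕ) := {p | p ∈ Idx q r m ∧ p.1 ≤ i} with hP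
  set Q : Set (ℕ × ℕ × ℕ) := {p | p ∈ Idx q r m ∧ p.2.1 ≤ j} with hQ
  have hPI : P ⊆ Idx q r m := fun p hp => hp.1
  have hQI : Q ⊆ Idx q r m := fun p hp => hp.1
  have hBi : B i = Submodule.span k (v '' P) := hB i hiq
  have hCj : C j = Submodule.span k (v '' Q) := hC j hjr
  have hPQ : P ∩ Q = ↑(idxF m i j) := by
    rw [coe_idxF m hiq hjr]
    ext p
    simp only [hP, hQ, Set.mem_inter_iff, Set.mem_setOf_eq]
    tauto
  -- part 1 : dimension of the intersection
  have hinter : B i ⊓ C j = Submodule.span k (v '' (P ∩ Q)) := by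
    rw [hBi, hCj, himg P hPI, himg Q hQI, span_image_inf, ← Set.preimage_inter,
      ← himg (P ∩ Q) (fun p hp => hp.1.1)]
  have hinj : Set.InjOn v (Idx q r m) := by
    intro a ha b hb hab
    have : (⟨a, ha⟩ : (Idx q r m : Set (ℕ × ℕ × ℕ))) = ⟨b, hb⟩ := hli.injective hab
    exact Subtype.ext_iff.1 this
  have hliF : LinearIndependent k ((↑) : ((idxF m i j).image v : Set V) → V) := by
    apply hli.linearIndepOn_id.mono
    rw [hrange, Finset.coe_image]
    apply Set.image_mono
    rw [← hPQ]
    exact fun p hp => hp.1.1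
  have hdim1 : Module.finrank k ↥(B i ⊓ C j) = rk m i j := by
    rw [hinter, hPQ, ← Finset.coe_image, finrank_span_finset_eq_card hliF,
      Finset.card_image_of_injOn (fun a ha b hb hab =>
        hinj (by rw [← hPQ] at ha; exact ha.1.1) (by rw [← hPQ] at hb; exact hb.1.1) hab),
      card_idxF]
  refine ⟨hdim1, ?_⟩
  rw [hdim1]
  -- part 2
  have hsup : B i ⊔ C j = Submodule.span k (v '' (P ∪ Q)) := by
    rw [hBi, hCj, ← Submodule.span_union, Set.image_union]
  congr 1
  by_cases hδ : ∀ p ∈ Δ, p.1 ≤ i ∨ p.2 ≤ j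
  · -- w lies in B i ⊔ C j
    have hwin : w ∈ B i ⊔ C j := by
      rw [hsup, hw]
      apply Submodule.sum_mem
      intro p hp
      apply Submodule.subset_span
      rcases hδ p hp with h | h
      · exact Set.mem_image_of_mem v (Set.mem_union_left Q
          (show ((p.1, p.2, 1) : ℕ × ℕ × ℕ) ∈ P from ⟨hIdxΔ p hp, h⟩))
      · exact Set.mem_image_of_mem v (Set.mem_union_right P
          (show ((p.1, p.2, 1) : ℕ × ℕ × ℕ) ∈ Q from ⟨hIdxΔ p hp, h⟩))
    have hAle : A ≤ B i ⊔ C j := by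
      rw [hA]
      rw [Submodule.span_le, Set.singleton_subset_iff]
      exact hwin
    rw [inf_eq_left.2 hAle, hA, deltaNum, if_pos hδ]
    exact finrank_span_singleton hw0
  · -- w does not lie in B i ⊔ C j
    push_neg at hδ
    obtain ⟨p₀, hp₀, hp₀i, hp₀j⟩ := hδ
    have hwnot : w ∉ B i ⊔ C j := by
      rw [hsup, himg (P ∪ Q) (fun p hp => hp.elim (fun h => h.1) fun h => h.1)]
      intro hmem
      have hsupp := (Module.Basis.mem_span_image bas).1 hmem
      have hx₀ : (⟨(p₀.1, p₀.2, 1), hIdxΔ p₀ hp₀⟩ : Idx q r m)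
          ∈ (bas.repr w).support := by
        rw [Finsupp.mem_support_iff, hcoord p₀ hp₀]
        exact one_ne_zero
      have := hsupp hx₀
      rcases this with h | h
      · exact absurd h.2 (not_le.2 hp₀i)
      · exact absurd h.2 (not_le.2 hp₀j)
    have hbot : A ⊓ (B i ⊔ C j) = ⊥ := by
      rw [eq_bot_iff]
      intro x hx
      rw [Submodule.mem_inf] at hx
      obtain ⟨hxA, hxBC⟩ := hx
      rw [hA, Submodule.mem_span_singleton] at hxA
      obtain ⟨c, rfl⟩ := hxA
      rcases eq_or_ne c 0 with rfl | hc
      · simp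
      · exfalso
        apply hwnot
        have := Submodule.smul_mem _ c⁻¹ hxBC
        rwa [smul_smul, inv_mul_cancel₀ hc, one_smul] at this
    rw [hbot, deltaNum, if_neg, finrank_bot]
    push_neg
    exact ⟨p₀, hp₀, hp₀i, hp₀j⟩

end TwoFlagsLine
end

section
/- For transport matrices M and M', one has M ≤_rk M' if and only if M ≤_mv M'. -/
open Finset

namespace TwoFlagsLine

/-- The matrix `M - E_{i0 j0} - E_{i1 j1} + E_{i0 j1} + E_{i1 j0}`. -/
def moveMat (m : ℕ → ℕ → ℕ) (i0 j0 i1 j1 : ℕ) : ℕ → ℕ → ℕ :=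
  fun i j =>
    if (i, j) = (i0, j0) ∨ (i, j) = (i1, j1) then m i j - 1
    else if (i, j) = (i0, j1) ∨ (i, j) = (i1, j0) then m i j + 1
    else m i j

/-- The simple move `M →_R M'` at the rectangle `R = [i0,i1] × [j0,j1]`. -/
def IsSimpleMoveAt (m m' : ℕ → ℕ → ℕ) (i0 j0 i1 j1 : ℕ) : Prop :=
  i0 < i1 ∧ j0 < j1 ∧ 0 < m i0 j0 ∧ 0 < m i1 j1 ∧
  (∀ i j : ℕ, i0 ≤ i → i ≤ i1 → j0 ≤ j → j ≤ j1 →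
    (i, j) ≠ (i0, j0) → (i, j) ≠ (i1, j1) → (i, j) ≠ (i0, j1) → (i, j) ≠ (i1, j0) →
    m i j = 0) ∧
  m' = moveMat m i0 j0 i1 j1

/-- Rank order `M ≤rk M'` : `r_{ij}(M) ≥ r_{ij}(M')` for all `(i,j) ∈ [0,q] × [0,r]`. -/
def RkLE (q r : ℕ) (m m' : ℕ → ℕ → ℕ) : Prop :=
  ∀ i ≤ q, ∀ j ≤ r, rk m' i j ≤ rk m i j

/-- A single simple move at some rectangle inside the matrix. -/
def MoveRel (q r : ℕ) (m m' : ℕ → ℕ → ℕ) : Prop :=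
  ∃ i0 j0 i1 j1 : ℕ, 1 ≤ i0 ∧ i1 ≤ q ∧ 1 ≤ j0 ∧ j1 ≤ r ∧
    IsSimpleMoveAt m m' i0 j0 i1 j1

/-- Move order: reflexive–transitive closure of simple moves. -/
def MoveLE (q r : ℕ) (m m' : ℕ → ℕ → ℕ) : Prop :=
  Relation.ReflTransGen (MoveRel q r) m m'

/-- `(i,j) ≤ Δ` : some element of `Δ` lies weakly southeast of `p`. -/
def Below (p : ℕ × ℕ) (Δ : Finset (ℕ × ℕ)) : Prop := ∃ p' ∈ Δ, p ≤ p'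

/-- Decorated rank numbers `r̄_{ij}(M,Δ) = r_{ij}(M) + δ_{ij}(Δ)`. -/
def rkBar (m : ℕ → ℕ → ℕ) (Δ : Finset (ℕ × ℕ)) (i j : ℕ) : ℕ :=
  rk m i j + deltaNum Δ i j

/-- Decorated rank order `(M,Δ) ≤rk (M',Δ')`. -/
def DecRkLE (q r : ℕ) (m : ℕ → ℕ → ℕ) (Δ : Finset (ℕ × ℕ))
    (m' : ℕ → ℕ → ℕ) (Δ' : Finset (ℕ × ℕ)) : Prop :=
  ∀ i ≤ q, ∀ j ≤ r, rk m' i j ≤ rk m i j ∧ rkBar m' Δ' i j ≤ rkBar m Δ i j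

/-- Simple move (i). -/
def MoveI (m : ℕ → ℕ → ℕ) (Δ : Finset (ℕ × ℕ))
    (m' : ℕ → ℕ → ℕ) (Δ' : Finset (ℕ × ℕ)) : Prop :=
  ∃ i1 j1 : ℕ, ¬ Below (i1, j1) Δ ∧ 0 < m i1 j1 ∧
    (∀ i j : ℕ, ((i, j) : ℕ × ℕ) < (i1, j1) → ¬ Below (i, j) Δ → m i j = 0) ∧
    m' = m ∧ Δ' = maxl (Δ ∪ {(i1, j1)})

/-- Simple move (ii). -/
def MoveII (m : ℕ → ℕ → ℕ) (Δ : Finset (ℕ × ℕ))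
    (m' : ℕ → ℕ → ℕ) (Δ' : Finset (ℕ × ℕ)) : Prop :=
  ∃ i0 j0 i1 j1 : ℕ, i0 < i1 ∧ j0 < j1 ∧ 0 < m i0 j0 ∧ 0 < m i1 j1 ∧
    (∀ i j : ℕ, ((i0, j0) : ℕ × ℕ) < (i, j) → ((i, j) : ℕ × ℕ) < (i1, j1) →
      (i, j) ≠ (i0, j1) → (i, j) ≠ (i1, j0) → m i j = 0) ∧
    (i1, j1) ∉ Δ ∧ ¬((i0, j1) ∈ Δ ∧ (i1, j0) ∈ Δ) ∧
    ((i0, j0) ∉ Δ ∨ 1 < m i0 j0) ∧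
    m' = moveMat m i0 j0 i1 j1 ∧ Δ' = Δ

/-- Simple move (iii)(a). -/
def MoveIIIa (m : ℕ → ℕ → ℕ) (Δ : Finset (ℕ × ℕ))
    (m' : ℕ → ℕ → ℕ) (Δ' : Finset (ℕ × ℕ)) : Prop :=
  ∃ i0 j0 i1 j1 : ℕ, i0 < i1 ∧ j0 < j1 ∧ (i0, j0) ∈ Δ ∧ m i0 j0 = 1 ∧ 0 < m i1 j1 ∧
    (∀ i j : ℕ, ((i0, j0) : ℕ × ℕ) < (i, j) → ((i, j) : ℕ × ℕ) < (i1, j1) →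
      (i, j) ≠ (i1, j0) → m i j = 0) ∧
    (∀ i j : ℕ, ((i, j) : ℕ × ℕ) ≤ (i0, j1) → ¬ Below (i, j) Δ → m i j = 0) ∧
    m' = moveMat m i0 j0 i1 j1 ∧ Δ' = maxl (Δ ∪ {(i0, j1)})

/-- Simple move (iii)(b). -/
def MoveIIIb (m : ℕ → ℕ → ℕ) (Δ : Finset (ℕ × ℕ))
    (m' : ℕ → ℕ → ℕ) (Δ' : Finset (ℕ × ℕ)) : Prop :=
  ∃ i0 j0 i1 j1 : ℕ, i0 < i1 ∧ j0 < j1 ∧ (i0, j0) ∈ Δ ∧ m i0 j0 = 1 ∧ 0 < m i1 j1 ∧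
    (∀ i j : ℕ, ((i0, j0) : ℕ × ℕ) < (i, j) → ((i, j) : ℕ × ℕ) < (i1, j1) →
      (i, j) ≠ (i0, j1) → m i j = 0) ∧
    (∀ i j : ℕ, ((i, j) : ℕ × ℕ) ≤ (i1, j0) → ¬ Below (i, j) Δ → m i j = 0) ∧
    m' = moveMat m i0 j0 i1 j1 ∧ Δ' = maxl (Δ ∪ {(i1, j0)})

/-- Simple move (iv)(a). -/
def MoveIVa (m : ℕ → ℕ → ℕ) (Δ : Finset (ℕ × ℕ))
    (m' : ℕ → ℕ → ℕ) (Δ' : Finset (ℕ × ℕ)) : Prop :=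
  ∃ i0 i2 i1 j2 j0 j1 : ℕ, i0 < i2 ∧ i2 < i1 ∧ j2 < j0 ∧ j0 < j1 ∧
    (i0, j0) ∈ Δ ∧ (i2, j2) ∈ Δ ∧ m i0 j0 = 1 ∧ m i2 j2 = 1 ∧ 0 < m i1 j1 ∧
    (∀ i j : ℕ, ((i0, j2) : ℕ × ℕ) < (i, j) → ((i, j) : ℕ × ℕ) < (i1, j1) →
      ¬ Below (i, j) Δ → (i, j) ≠ (i0, j1) → (i, j) ≠ (i1, j2) → m i j = 0) ∧
    m' = (fun i j =>
      if (i, j) = (i0, j0) ∨ (i, j) = (i1, j1) ∨ (i, j) = (i2, j2) then m i j - 1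
      else if (i, j) = (i1, j2) ∨ (i, j) = (i2, j0) ∨ (i, j) = (i0, j1) then m i j + 1
      else m i j) ∧
    Δ' = maxl (Δ ∪ {(i2, j0)})

/-- Simple move (iv)(b). -/
def MoveIVb (m : ℕ → ℕ → ℕ) (Δ : Finset (ℕ × ℕ))
    (m' : ℕ → ℕ → ℕ) (Δ' : Finset (ℕ × ℕ)) : Prop :=
  ∃ i0 i2 i1 j0 j1 : ℕ, i0 < i2 ∧ i2 < i1 ∧ j0 < j1 ∧
    0 < m i0 j0 ∧ 0 < m i1 j1 ∧ (i2, j0) ∈ Δ ∧ m i2 j0 = 1 ∧ ¬ Below (i0, j1) Δ ∧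
    (∀ i j : ℕ, ((i0, j0) : ℕ × ℕ) < (i, j) → ((i, j) : ℕ × ℕ) < (i1, j1) →
      (i, j) ≠ (i0, j1) → (i, j) ≠ (i1, j0) → (i, j) ≠ (i2, j0) → m i j = 0) ∧
    m' = moveMat m i0 j0 i1 j1 ∧ Δ' = Δ

/-- Simple move (iv)(c). -/
def MoveIVc (m : ℕ → ℕ → ℕ) (Δ : Finset (ℕ × ℕ))
    (m' : ℕ → ℕ → ℕ) (Δ' : Finset (ℕ × ℕ)) : Prop :=
  ∃ i0 i1 j0 j2 j1 : ℕ, i0 < i1 ∧ j0 < j2 ∧ j2 < j1 ∧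
    0 < m i0 j0 ∧ 0 < m i1 j1 ∧ (i0, j2) ∈ Δ ∧ m i0 j2 = 1 ∧ ¬ Below (i1, j0) Δ ∧
    (∀ i j : ℕ, ((i0, j0) : ℕ × ℕ) < (i, j) → ((i, j) : ℕ × ℕ) < (i1, j1) →
      (i, j) ≠ (i0, j1) → (i, j) ≠ (i1, j0) → (i, j) ≠ (i0, j2) → m i j = 0) ∧
    m' = moveMat m i0 j0 i1 j1 ∧ Δ' = Δ

/-- Simple move (v), with circled positions `(I 1, J 1), …, (I t, J t)` and
`(i0, j0) = (I 0, J 0)`. -/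
def MoveV (m : ℕ → ℕ → ℕ) (Δ : Finset (ℕ × ℕ))
    (m' : ℕ → ℕ → ℕ) (Δ' : Finset (ℕ × ℕ)) : Prop :=
  ∃ (t : ℕ) (I J : ℕ → ℕ), 1 ≤ t ∧
    (∀ s : ℕ, 1 ≤ s → s ≤ t → I (s - 1) < I s) ∧
    (∀ s : ℕ, 1 ≤ s → s < t → J (s + 1) < J s) ∧
    J 0 < J t ∧
    (∀ s : ℕ, 1 ≤ s → s ≤ t → (I s, J s) ∈ Δ) ∧
    0 < m (I 0) (J 0) ∧
    (∀ i j s : ℕ, 1 ≤ s → s ≤ t →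
      ((I 0, J 0) : ℕ × ℕ) < (i, j) → i ≤ I s - 1 → j ≤ J s - 1 → m i j = 0) ∧
    m' = (fun i j =>
      if (i, j) = (I 0, J 1) ∨ (i, j) = (I t, J 0) then m i j + 1
      else if (i, j) ∈ (Finset.range (t + 1)).image (fun s => (I s, J s)) then m i j - 1
      else m i j) ∧
    Δ' = (Δ \ (Finset.range (t + 1)).image (fun s => (I s, J s))) ∪ {(I 0, J 1), (I t, J 0)}

/-- One of the simple moves (i)–(v) on decorated matrices. -/
def MoveRelDec (m : ℕ → ℕ → ℕ) (Δ : Finset (ℕ × ℕ))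
    (m' : ℕ → ℕ → ℕ) (Δ' : Finset (ℕ × ℕ)) : Prop :=
  MoveI m Δ m' Δ' ∨ MoveII m Δ m' Δ' ∨ MoveIIIa m Δ m' Δ' ∨ MoveIIIb m Δ m' Δ' ∨
  MoveIVa m Δ m' Δ' ∨ MoveIVb m Δ m' Δ' ∨ MoveIVc m Δ m' Δ' ∨ MoveV m Δ m' Δ'

/-- Decorated move order: reflexive–transitive closure of the simple moves (i)–(v). -/
def DecMoveLE (m : ℕ → ℕ → ℕ) (Δ : Finset (ℕ × ℕ))
    (m' : ℕ → ℕ → ℕ) (Δ' : Finset (ℕ × ℕ)) : Prop :=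
  Relation.ReflTransGen
    (fun x y : (ℕ → ℕ → ℕ) × Finset (ℕ × ℕ) => MoveRelDec x.1 x.2 y.1 y.2) (m, Δ) (m', Δ')


-- ===== auxiliary lemmas =====
lemma Icc1 (n : ℕ) : Finset.Icc 1 n = Finset.Ioc 0 n := by
  ext x; simp only [Finset.mem_Icc, Finset.mem_Ioc]; omega

lemma rk_eq2 (m : ℕ → ℕ → ℕ) (i j : ℕ) :
    rk m i j = ∑ k ∈ Finset.Ioc 0 i, ∑ l ∈ Finset.Ioc 0 j, m k l := by
  simp [rk, Icc1]

lemma rk_eq_prod (m : ℕ → ℕ → ℕ) (i j : ℕ) :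
    rk m i j = ∑ p ∈ Finset.Ioc 0 i ×ˢ Finset.Ioc 0 j, m p.1 p.2 := by
  rw [rk_eq2, Finset.sum_product]

lemma moveMat_cast (m : ℕ → ℕ → ℕ) {a b c d : ℕ} (hac : a ≠ c) (hbd : b ≠ d)
    (hab : 0 < m a b) (hcd : 0 < m c d) (x y : ℕ) :
    (moveMat m a b c d x y : ℤ) =
      (m x y : ℤ) + (if (x, y) = (a, d) ∨ (x, y) = (c, b) then 1 else 0)
        - (if (x, y) = (a, b) ∨ (x, y) = (c, d) then 1 else 0) := by
  simp only [moveMat, Prod.mk.injEq]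
  split_ifs with h1 h2 <;>
    first
      | omega
      | (rcases h1 with ⟨rfl, rfl⟩ | ⟨rfl, rfl⟩ <;> omega)

lemma ite_or_split (P Q : Prop) [Decidable P] [Decidable Q] (h : ¬(P ∧ Q)) :
    (if P ∨ Q then (1:ℤ) else 0) = (if P then 1 else 0) + (if Q then 1 else 0) := by
  by_cases hp : P <;> by_cases hq : Q <;> simp [hp, hq]
  exact h ⟨hp, hq⟩

lemma sum_point (i j : ℕ) (u v : ℕ) (hu : 0 < u) (hv : 0 < v) :
    (∑ p ∈ Finset.Ioc 0 i ×ˢ Finset.Ioc 0 j, if p = (u, v) then (1:ℤ) else 0)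
      = if u ≤ i ∧ v ≤ j then 1 else 0 := by
  rw [Finset.sum_ite_eq' (Finset.Ioc 0 i ×ˢ Finset.Ioc 0 j) ((u, v) : ℕ × ℕ) (fun _ => (1:ℤ))]
  simp [Finset.mem_product, Finset.mem_Ioc, hu, hv]

lemma rk_moveMat (m : ℕ → ℕ → ℕ) {a b c d : ℕ} (hac : a < c) (hbd : b < d)
    (ha1 : 1 ≤ a) (hb1 : 1 ≤ b) (hab : 0 < m a b) (hcd : 0 < m c d) (i j : ℕ) :
    (rk (moveMat m a b c d) i j : ℤ) =
      (rk m i j : ℤ)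
        + ((if a ≤ i ∧ d ≤ j then 1 else 0) + (if c ≤ i ∧ b ≤ j then 1 else 0))
        - ((if a ≤ i ∧ b ≤ j then 1 else 0) + (if c ≤ i ∧ d ≤ j then 1 else 0)) := by
  have h1 : (rk (moveMat m a b c d) i j : ℤ)
      = ∑ p ∈ Finset.Ioc 0 i ×ˢ Finset.Ioc 0 j, (moveMat m a b c d p.1 p.2 : ℤ) := by
    rw [rk_eq_prod]; push_cast; rfl
  rw [h1]
  have h2 : ∀ p ∈ Finset.Ioc 0 i ×ˢ Finset.Ioc 0 j,
      (moveMat m a b c d p.1 p.2 : ℤ)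
        = (m p.1 p.2 : ℤ) + ((if p = ((a, d) : ℕ × ℕ) then 1 else 0)
            + (if p = ((c, b) : ℕ × ℕ) then 1 else 0))
          - ((if p = ((a, b) : ℕ × ℕ) then 1 else 0)
            + (if p = ((c, d) : ℕ × ℕ) then 1 else 0)) := by
    intro p _
    rw [moveMat_cast m (Nat.ne_of_lt hac) (Nat.ne_of_lt hbd) hab hcd p.1 p.2]
    rw [show ((p.1, p.2) : ℕ × ℕ) = p from rfl]
    rw [ite_or_split _ _ (by rintro ⟨rfl, h⟩; rw [Prod.ext_iff] at h; simp at h; omega),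
        ite_or_split _ _ (by rintro ⟨h1, h2⟩; rw [Prod.ext_iff] at h1 h2; simp at h1 h2; omega)]
  rw [Finset.sum_congr rfl h2]
  simp only [Finset.sum_add_distrib, Finset.sum_sub_distrib]
  rw [sum_point i j a d (by omega) (by omega), sum_point i j c b (by omega) (by omega),
      sum_point i j a b (by omega) (by omega), sum_point i j c d (by omega) (by omega)]
  rw [rk_eq_prod]
  push_cast
  ring
lemma rk_split_row (m : ℕ → ℕ → ℕ) {i' i : ℕ} (j : ℕ) (hi : i' ≤ i) :
    rk m i j = rk m i' j + ∑ k ∈ Finset.Ioc i' i, ∑ l ∈ Finset.Ioc 0 j, m k l := by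
  simp only [rk_eq2]
  exact (Finset.sum_Ioc_consecutive _ (Nat.zero_le i') hi).symm

lemma rk_split_col (m : ℕ → ℕ → ℕ) (i : ℕ) {j' j : ℕ} (hj : j' ≤ j) :
    rk m i j = rk m i j' + ∑ k ∈ Finset.Ioc 0 i, ∑ l ∈ Finset.Ioc j' j, m k l := by
  simp only [rk_eq2]
  rw [← Finset.sum_add_distrib]
  exact Finset.sum_congr rfl fun k _ => (Finset.sum_Ioc_consecutive _ (Nat.zero_le j') hj).symm

lemma rk_rect (m : ℕ → ℕ → ℕ) {i' i j' j : ℕ} (hi : i' ≤ i) (hj : j' ≤ j) :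
    rk m i j + rk m i' j' =
      rk m i' j + rk m i j' + ∑ k ∈ Finset.Ioc i' i, ∑ l ∈ Finset.Ioc j' j, m k l := by
  have h1 := rk_split_row m j hi
  have h2 := rk_split_row m j' hi
  have h3 : ∑ k ∈ Finset.Ioc i' i, ∑ l ∈ Finset.Ioc 0 j, m k l
      = ∑ k ∈ Finset.Ioc i' i, ∑ l ∈ Finset.Ioc 0 j', m k l
        + ∑ k ∈ Finset.Ioc i' i, ∑ l ∈ Finset.Ioc j' j, m k l := by
    rw [← Finset.sum_add_distrib]
    exact Finset.sum_congr rfl fun k _ => (Finset.sum_Ioc_consecutive _ (Nat.zero_le j') hj).symm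
  omega

lemma rk_entry (m : ℕ → ℕ → ℕ) {i j : ℕ} (hi : 1 ≤ i) (hj : 1 ≤ j) :
    rk m i j + rk m (i-1) (j-1) = rk m (i-1) j + rk m i (j-1) + m i j := by
  have h := rk_rect m (Nat.sub_le i 1) (Nat.sub_le j 1)
  have e1 : Finset.Ioc (i-1) i = {i} := by ext x; simp; omega
  have e2 : Finset.Ioc (j-1) j = {j} := by ext x; simp; omega
  rw [e1, e2] at h
  simpa using h

lemma rk_zero_left (m : ℕ → ℕ → ℕ) (j : ℕ) : rk m 0 j = 0 := by simp [rk]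
lemma rk_zero_right (m : ℕ → ℕ → ℕ) (i : ℕ) : rk m i 0 = 0 := by simp [rk]

lemma sum_point_row (r u v : ℕ) (hv1 : 1 ≤ v) (hvr : v ≤ r) (i : ℕ) :
    (∑ y ∈ Finset.Icc 1 r, if ((i, y) : ℕ × ℕ) = (u, v) then (1:ℤ) else 0)
      = if i = u then 1 else 0 := by
  have hpt : ∀ y : ℕ, (if ((i, y) : ℕ × ℕ) = (u, v) then (1:ℤ) else 0)
      = if y = v then (if i = u then (1:ℤ) else 0) else 0 := by
    intro y
    by_cases h1 : y = v <;> by_cases h2 : i = u <;>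
      simp [h1, h2, Prod.ext_iff] <;> tauto
  rw [Finset.sum_congr rfl fun y _ => hpt y, Finset.sum_ite_eq' (Finset.Icc 1 r) v _,
    if_pos (by simp [Finset.mem_Icc]; omega)]

lemma sum_point_col (q u v : ℕ) (hu1 : 1 ≤ u) (huq : u ≤ q) (j : ℕ) :
    (∑ x ∈ Finset.Icc 1 q, if ((x, j) : ℕ × ℕ) = (u, v) then (1:ℤ) else 0)
      = if j = v then 1 else 0 := by
  have hpt : ∀ x : ℕ, (if ((x, j) : ℕ × ℕ) = (u, v) then (1:ℤ) else 0)
      = if x = u then (if j = v then (1:ℤ) else 0) else 0 := by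
    intro x
    by_cases h1 : x = u <;> by_cases h2 : j = v <;>
      simp [h1, h2, Prod.ext_iff] <;> tauto
  rw [Finset.sum_congr rfl fun x _ => hpt x, Finset.sum_ite_eq' (Finset.Icc 1 q) u _,
    if_pos (by simp [Finset.mem_Icc]; omega)]


lemma isTransport_moveMat {q r : ℕ} {b c : ℕ → ℕ} {m : ℕ → ℕ → ℕ}
    (hm : IsTransport q r b c m) {a' b' c' d' : ℕ}
    (hac : a' < c') (hbd : b' < d') (ha1 : 1 ≤ a') (hb1 : 1 ≤ b')
    (hcq : c' ≤ q) (hdr : d' ≤ r)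
    (hab : 0 < m a' b') (hcd : 0 < m c' d') :
    IsTransport q r b c (moveMat m a' b' c' d') := by
  have hne : a' ≠ c' := Nat.ne_of_lt hac
  have hne2 : b' ≠ d' := Nat.ne_of_lt hbd
  refine ⟨?_, ?_, ?_⟩
  · intro i j hij
    have hbase := hm.1 i j hij
    have hout : (i ∉ Finset.Icc 1 q) ∨ (j ∉ Finset.Icc 1 r) := hij
    simp only [Finset.mem_Icc, not_and, not_le] at hout
    simp only [moveMat, Prod.mk.injEq]
    rw [if_neg, if_neg]
    · exact hbase
    · rintro (⟨rfl, rfl⟩ | ⟨rfl, rfl⟩) <;> omega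
    · rintro (⟨rfl, rfl⟩ | ⟨rfl, rfl⟩) <;> omega
  · intro i hi
    rw [← hm.2.1 i hi]
    have : (∑ j ∈ Finset.Icc 1 r, (moveMat m a' b' c' d' i j : ℤ))
        = ∑ j ∈ Finset.Icc 1 r, (m i j : ℤ) := by
      rw [Finset.sum_congr rfl fun y _ => moveMat_cast m hne hne2 hab hcd i y]
      simp only [Finset.sum_add_distrib, Finset.sum_sub_distrib]
      rw [Finset.sum_congr rfl fun y _ =>
        ite_or_split (((i,y) : ℕ × ℕ) = (a', d')) (((i,y) : ℕ × ℕ) = (c', b'))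
          (by rintro ⟨h1, h2⟩; rw [Prod.ext_iff] at h1 h2; simp at h1 h2; omega)]
      rw [Finset.sum_congr rfl fun y _ =>
        ite_or_split (((i,y) : ℕ × ℕ) = (a', b')) (((i,y) : ℕ × ℕ) = (c', d'))
          (by rintro ⟨h1, h2⟩; rw [Prod.ext_iff] at h1 h2; simp at h1 h2; omega)]
      simp only [Finset.sum_add_distrib]
      rw [sum_point_row r a' d' (by omega) (by omega) i,
          sum_point_row r c' b' (by omega) (by omega) i,
          sum_point_row r a' b' (by omega) (by omega) i,
          sum_point_row r c' d' (by omega) (by omega) i]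
      ring
    exact_mod_cast (by push_cast at this ⊢; linarith [this] :
      ((∑ j ∈ Finset.Icc 1 r, moveMat m a' b' c' d' i j : ℕ) : ℤ)
        = ((∑ j ∈ Finset.Icc 1 r, m i j : ℕ) : ℤ))
  · intro j hj
    rw [← hm.2.2 j hj]
    have : (∑ x ∈ Finset.Icc 1 q, (moveMat m a' b' c' d' x j : ℤ))
        = ∑ x ∈ Finset.Icc 1 q, (m x j : ℤ) := by
      rw [Finset.sum_congr rfl fun x _ => moveMat_cast m hne hne2 hab hcd x j]
      simp only [Finset.sum_add_distrib, Finset.sum_sub_distrib]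
      rw [Finset.sum_congr rfl fun x _ =>
        ite_or_split (((x,j) : ℕ × ℕ) = (a', d')) (((x,j) : ℕ × ℕ) = (c', b'))
          (by rintro ⟨h1, h2⟩; rw [Prod.ext_iff] at h1 h2; simp at h1 h2; omega)]
      rw [Finset.sum_congr rfl fun x _ =>
        ite_or_split (((x,j) : ℕ × ℕ) = (a', b')) (((x,j) : ℕ × ℕ) = (c', d'))
          (by rintro ⟨h1, h2⟩; rw [Prod.ext_iff] at h1 h2; simp at h1 h2; omega)]
      simp only [Finset.sum_add_distrib]
      rw [sum_point_col q a' d' (by omega) (by omega) j,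
          sum_point_col q c' b' (by omega) (by omega) j,
          sum_point_col q a' b' (by omega) (by omega) j,
          sum_point_col q c' d' (by omega) (by omega) j]
      ring
    exact_mod_cast (by push_cast at this ⊢; linarith [this] :
      ((∑ x ∈ Finset.Icc 1 q, moveMat m a' b' c' d' x j : ℕ) : ℤ)
        = ((∑ x ∈ Finset.Icc 1 q, m x j : ℕ) : ℤ))


lemma rk_clamp_left {q r : ℕ} {m : ℕ → ℕ → ℕ}
    (hsupp : ∀ i j : ℕ, i ∉ Finset.Icc 1 q ∨ j ∉ Finset.Icc 1 r → m i j = 0)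
    {i : ℕ} (h : q ≤ i) (j : ℕ) : rk m i j = rk m q j := by
  rw [rk_split_row m j h]
  have : ∑ k ∈ Finset.Ioc q i, ∑ l ∈ Finset.Ioc 0 j, m k l = 0 :=
    Finset.sum_eq_zero fun k hk => Finset.sum_eq_zero fun l _ =>
      hsupp k l (Or.inl (by simp only [Finset.mem_Ioc] at hk; simp [Finset.mem_Icc]; omega))
  omega

lemma rk_clamp_right {q r : ℕ} {m : ℕ → ℕ → ℕ}
    (hsupp : ∀ i j : ℕ, i ∉ Finset.Icc 1 q ∨ j ∉ Finset.Icc 1 r → m i j = 0)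
    (i : ℕ) {j : ℕ} (h : r ≤ j) : rk m i j = rk m i r := by
  rw [rk_split_col m i h]
  have : ∑ k ∈ Finset.Ioc 0 i, ∑ l ∈ Finset.Ioc r j, m k l = 0 :=
    Finset.sum_eq_zero fun k _ => Finset.sum_eq_zero fun l hl =>
      hsupp k l (Or.inr (by simp only [Finset.mem_Ioc] at hl; simp [Finset.mem_Icc]; omega))
  omega

lemma rk_row_total {q r : ℕ} {b c : ℕ → ℕ} {m : ℕ → ℕ → ℕ}
    (hm : IsTransport q r b c m) {i : ℕ} (hi : i ≤ q) :
    rk m i r = ∑ k ∈ Finset.Ioc 0 i, b k := by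
  rw [rk_eq2]
  refine Finset.sum_congr rfl fun k hk => ?_
  simp only [Finset.mem_Ioc] at hk
  rw [← Icc1, hm.2.1 k (by simp [Finset.mem_Icc]; omega)]

lemma rk_col_total {q r : ℕ} {b c : ℕ → ℕ} {m : ℕ → ℕ → ℕ}
    (hm : IsTransport q r b c m) {j : ℕ} (hj : j ≤ r) :
    rk m q j = ∑ l ∈ Finset.Ioc 0 j, c l := by
  rw [rk_eq2, Finset.sum_comm]
  refine Finset.sum_congr rfl fun l hl => ?_
  simp only [Finset.mem_Ioc] at hl
  rw [← Icc1, hm.2.2 l (by simp [Finset.mem_Icc]; omega)]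

lemma rk_boundary_eq {q r : ℕ} {b c : ℕ → ℕ} {m m' : ℕ → ℕ → ℕ}
    (hm : IsTransport q r b c m) (hm' : IsTransport q r b c m') :
    ∀ i j : ℕ, (q ≤ i ∨ r ≤ j) → rk m i j = rk m' i j := by
  intro i j hij
  rcases hij with h | h
  · rcases le_total j r with hj | hj
    · rw [rk_clamp_left hm.1 h j, rk_clamp_left hm'.1 h j,
        rk_col_total hm hj, rk_col_total hm' hj]
    · rw [rk_clamp_left hm.1 h j, rk_clamp_left hm'.1 h j,
        rk_clamp_right hm.1 q hj, rk_clamp_right hm'.1 q hj,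
        rk_row_total hm (le_refl q), rk_row_total hm' (le_refl q)]
  · rcases le_total i q with hi | hi
    · rw [rk_clamp_right hm.1 i h, rk_clamp_right hm'.1 i h,
        rk_row_total hm hi, rk_row_total hm' hi]
    · rw [rk_clamp_right hm.1 i h, rk_clamp_right hm'.1 i h,
        rk_clamp_left hm.1 hi r, rk_clamp_left hm'.1 hi r,
        rk_row_total hm (le_refl q), rk_row_total hm' (le_refl q)]

lemma rkLE_global {q r : ℕ} {b c : ℕ → ℕ} {m m' : ℕ → ℕ → ℕ}
    (hm : IsTransport q r b c m) (hm' : IsTransport q r b c m')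
    (hle : RkLE q r m m') : ∀ i j : ℕ, rk m' i j ≤ rk m i j := by
  intro i j
  rcases le_or_gt i q with hi | hi
  · rcases le_or_gt j r with hj | hj
    · exact hle i hi j hj
    · rw [rk_boundary_eq hm hm' i j (Or.inr (le_of_lt hj))]
  · rw [rk_boundary_eq hm hm' i j (Or.inl (le_of_lt hi))]

lemma eq_of_rk_eq {q r : ℕ} {b c : ℕ → ℕ} {m m' : ℕ → ℕ → ℕ}
    (hm : IsTransport q r b c m) (hm' : IsTransport q r b c m')
    (heq : ∀ i ≤ q, ∀ j ≤ r, rk m i j = rk m' i j) : m = m' := by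
  have hg : ∀ i j : ℕ, rk m i j = rk m' i j := by
    intro i j
    rcases le_or_gt i q with hi | hi
    · rcases le_or_gt j r with hj | hj
      · exact heq i hi j hj
      · exact rk_boundary_eq hm hm' i j (Or.inr (le_of_lt hj))
    · exact rk_boundary_eq hm hm' i j (Or.inl (le_of_lt hi))
  funext i j
  rcases le_or_gt 1 i with hi1 | hi1
  · rcases le_or_gt 1 j with hj1 | hj1
    · have h1 := rk_entry m hi1 hj1
      have h2 := rk_entry m' hi1 hj1
      have e1 := hg i j
      have e2 := hg (i-1) (j-1)
      have e3 := hg (i-1) j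
      have e4 := hg i (j-1)
      omega
    · rw [hm.1 i j (Or.inr (by simp [Finset.mem_Icc]; omega)),
        hm'.1 i j (Or.inr (by simp [Finset.mem_Icc]; omega))]
  · rw [hm.1 i j (Or.inl (by simp [Finset.mem_Icc]; omega)),
      hm'.1 i j (Or.inl (by simp [Finset.mem_Icc]; omega))]




lemma rk_moveMat_le (m : ℕ → ℕ → ℕ) {a b c d : ℕ} (hac : a < c) (hbd : b < d)
    (ha1 : 1 ≤ a) (hb1 : 1 ≤ b) (hab : 0 < m a b) (hcd : 0 < m c d) (i j : ℕ) :
    rk (moveMat m a b c d) i j ≤ rk m i j := by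
  have E := rk_moveMat m hac hbd ha1 hb1 hab hcd i j
  split_ifs at E <;> omega

lemma moveLE_rkLE {q r : ℕ} {m m' : ℕ → ℕ → ℕ} (h : MoveLE q r m m') :
    RkLE q r m m' := by
  induction h with
  | refl => exact fun i _ j _ => le_refl _
  | tail _ hstep ih =>
    rename_i mb mc _
    obtain ⟨i0, j0, i1, j1, h1, h2, h3, h4, hii, hjj, h00, h11, _, hmc⟩ := hstep
    intro i hi j hj
    subst hmc
    exact le_trans (rk_moveMat_le mb hii hjj h1 h3 h00 h11 i j) (ih i hi j hj)

lemma funext_of_cast {f g : ℕ → ℕ → ℕ} (h : ∀ x y : ℕ, (f x y : ℤ) = (g x y : ℤ)) :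
    f = g :=
  funext fun x => funext fun y => by exact_mod_cast h x y

def castF (m : ℕ → ℕ → ℕ) : ℕ → ℕ → ℤ := fun x y => (m x y : ℤ)

def Ef (u v : ℕ) : ℕ → ℕ → ℤ := fun x y => if (x, y) = (u, v) then 1 else 0

lemma castF_inj {f g : ℕ → ℕ → ℕ} (h : castF f = castF g) : f = g := by
  funext x y
  have := congrFun (congrFun h x) y
  simp only [castF] at this
  exact_mod_cast this

lemma castF_moveMat (m : ℕ → ℕ → ℕ) {a b c d : ℕ} (hac : a ≠ c) (hbd : b ≠ d)
    (hab : 0 < m a b) (hcd : 0 < m c d) :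
    castF (moveMat m a b c d) = castF m + Ef a d + Ef c b - Ef a b - Ef c d := by
  funext x y
  simp only [Pi.add_apply, Pi.sub_apply, castF, Ef]
  rw [moveMat_cast m hac hbd hab hcd x y]
  by_cases h1 : ((x, y) : ℕ × ℕ) = (a, d) <;>
    by_cases h2 : ((x, y) : ℕ × ℕ) = (c, b) <;>
    by_cases h3 : ((x, y) : ℕ × ℕ) = (a, b) <;>
    by_cases h4 : ((x, y) : ℕ × ℕ) = (c, d) <;>
    simp [h1, h2, h3, h4] <;>
    (try rw [Prod.ext_iff] at h1 h2 h3 h4) <;> simp_all <;> omega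

lemma moveMat_ne (m : ℕ → ℕ → ℕ) (a b c d x y : ℕ)
    (h1 : ¬(x = a ∧ y = b)) (h2 : ¬(x = c ∧ y = d))
    (h3 : ¬(x = a ∧ y = d)) (h4 : ¬(x = c ∧ y = b)) :
    moveMat m a b c d x y = m x y := by
  simp only [moveMat, Prod.mk.injEq]
  rw [if_neg (by tauto), if_neg (by tauto)]

lemma moveMat_plus_ad (m : ℕ → ℕ → ℕ) (a b c d : ℕ) (hac : a ≠ c) (hbd : b ≠ d) :
    moveMat m a b c d a d = m a d + 1 := by
  simp only [moveMat, Prod.mk.injEq]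
  rw [if_neg (by tauto), if_pos (by tauto)]

lemma moveMat_plus_cb (m : ℕ → ℕ → ℕ) (a b c d : ℕ) (hac : a ≠ c) (hbd : b ≠ d) :
    moveMat m a b c d c b = m c b + 1 := by
  simp only [moveMat, Prod.mk.injEq]
  rw [if_neg (by tauto), if_pos (by tauto)]

set_option maxHeartbeats 1000000 in
lemma transfer_moveLE (q r : ℕ) : ∀ (N : ℕ) (m : ℕ → ℕ → ℕ) (i0 j0 i1 j1 : ℕ),
    i1 - i0 + (j1 - j0) ≤ N →
    1 ≤ i0 → i0 < i1 → i1 ≤ q → 1 ≤ j0 → j0 < j1 → j1 ≤ r →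
    0 < m i0 j0 → 0 < m i1 j1 → MoveLE q r m (moveMat m i0 j0 i1 j1) := by
  intro N
  induction N with
  | zero => intro m i0 j0 i1 j1 hN h1 hii h2 h3 hjj h4 h00 h11; omega
  | succ N ih =>
    intro m i0 j0 i1 j1 hN h1 hii h2 h3 hjj h4 h00 h11
    by_cases hz : ∀ i j : ℕ, i0 ≤ i → i ≤ i1 → j0 ≤ j → j ≤ j1 →
        (i, j) ≠ (i0, j0) → (i, j) ≠ (i1, j1) → (i, j) ≠ (i0, j1) → (i, j) ≠ (i1, j0) →
        m i j = 0
    · exact Relation.ReflTransGen.single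
        ⟨i0, j0, i1, j1, h1, h2, h3, h4, hii, hjj, h00, h11, hz, rfl⟩
    · push_neg at hz
      obtain ⟨u, v, hui0, hui1, hvj0, hvj1, hne1, hne2, hne3, hne4, hmuv0⟩ := hz
      have hmuv : 0 < m u v := Nat.pos_of_ne_zero hmuv0
      have hP : ∀ {x y a b : ℕ}, (((x, y) : ℕ × ℕ) ≠ (a, b)) ↔ ¬(x = a ∧ y = b) := by
        intro x y a b; rw [Ne, Prod.ext_iff]
      rw [hP] at hne1 hne2 hne3 hne4
      by_cases hv0 : v = j0
      · -- case 1 : entry on bottom edge, i0 < u < i1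
        have hmuv : 0 < m u j0 := by rwa [hv0] at hmuv
        have hu1 : i0 < u := by omega
        have hu2 : u < i1 := by omega
        have stepA : MoveLE q r m (moveMat m u j0 i1 j1) :=
          ih m u j0 i1 j1 (by omega) (by omega) hu2 h2 h3 hjj h4 hmuv h11
        have pAB : 0 < moveMat m u j0 i1 j1 i0 j0 := by
          rw [moveMat_ne m u j0 i1 j1 i0 j0 (by omega) (by omega) (by omega) (by omega)]
          exact h00
        have pCD : 0 < moveMat m u j0 i1 j1 u j1 := by
          rw [moveMat_plus_ad m u j0 i1 j1 (by omega) (by omega)]; omega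
        have stepB : MoveLE q r (moveMat m u j0 i1 j1)
            (moveMat (moveMat m u j0 i1 j1) i0 j0 u j1) :=
          ih _ i0 j0 u j1 (by omega) h1 hu1 (by omega) h3 hjj h4 pAB pCD
        have hE : moveMat (moveMat m u j0 i1 j1) i0 j0 u j1 = moveMat m i0 j0 i1 j1 := by
          apply castF_inj
          rw [castF_moveMat _ (by omega : i0 ≠ u) (by omega : j0 ≠ j1) pAB pCD,
            castF_moveMat m (by omega : u ≠ i1) (by omega : j0 ≠ j1) hmuv h11,
            castF_moveMat m (by omega : i0 ≠ i1) (by omega : j0 ≠ j1) h00 h11]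
          abel
        exact Relation.ReflTransGen.trans stepA (hE ▸ stepB)
      · by_cases hv1 : v = j1
        · -- case 2 : entry on top edge, i0 < u < i1
          have hmuv : 0 < m u j1 := by rwa [hv1] at hmuv
          have hu1 : i0 < u := by omega
          have hu2 : u < i1 := by omega
          have stepA : MoveLE q r m (moveMat m i0 j0 u j1) :=
            ih m i0 j0 u j1 (by omega) h1 hu1 (by omega) h3 hjj h4 h00 hmuv
          have pAB : 0 < moveMat m i0 j0 u j1 u j0 := by
            rw [moveMat_plus_cb m i0 j0 u j1 (by omega) (by omega)]; omega
          have pCD : 0 < moveMat m i0 j0 u j1 i1 j1 := by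
            rw [moveMat_ne m i0 j0 u j1 i1 j1 (by omega) (by omega) (by omega) (by omega)]
            exact h11
          have stepB : MoveLE q r (moveMat m i0 j0 u j1)
              (moveMat (moveMat m i0 j0 u j1) u j0 i1 j1) :=
            ih _ u j0 i1 j1 (by omega) (by omega) hu2 h2 h3 hjj h4 pAB pCD
          have hE : moveMat (moveMat m i0 j0 u j1) u j0 i1 j1 = moveMat m i0 j0 i1 j1 := by
            apply castF_inj
            rw [castF_moveMat _ (by omega : u ≠ i1) (by omega : j0 ≠ j1) pAB pCD,
              castF_moveMat m (by omega : i0 ≠ u) (by omega : j0 ≠ j1) h00 hmuv,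
              castF_moveMat m (by omega : i0 ≠ i1) (by omega : j0 ≠ j1) h00 h11]
            abel
          exact Relation.ReflTransGen.trans stepA (hE ▸ stepB)
        · by_cases hu0 : u = i0
          · -- case 3 : entry on left row i0, j0 < v < j1
            have hmuv : 0 < m i0 v := by rwa [hu0] at hmuv
            have hv1' : j0 < v := by omega
            have hv2 : v < j1 := by omega
            have stepA : MoveLE q r m (moveMat m i0 v i1 j1) :=
              ih m i0 v i1 j1 (by omega) h1 hii h2 (by omega) hv2 h4 hmuv h11
            have pAB : 0 < moveMat m i0 v i1 j1 i0 j0 := by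
              rw [moveMat_ne m i0 v i1 j1 i0 j0 (by omega) (by omega) (by omega) (by omega)]
              exact h00
            have pCD : 0 < moveMat m i0 v i1 j1 i1 v := by
              rw [moveMat_plus_cb m i0 v i1 j1 (by omega) (by omega)]; omega
            have stepB : MoveLE q r (moveMat m i0 v i1 j1)
                (moveMat (moveMat m i0 v i1 j1) i0 j0 i1 v) :=
              ih _ i0 j0 i1 v (by omega) h1 hii h2 h3 hv1' (by omega) pAB pCD
            have hE : moveMat (moveMat m i0 v i1 j1) i0 j0 i1 v = moveMat m i0 j0 i1 j1 := by
              apply castF_inj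
              rw [castF_moveMat _ (by omega : i0 ≠ i1) (by omega : j0 ≠ v) pAB pCD,
                castF_moveMat m (by omega : i0 ≠ i1) (by omega : v ≠ j1) hmuv h11,
                castF_moveMat m (by omega : i0 ≠ i1) (by omega : j0 ≠ j1) h00 h11]
              abel
            exact Relation.ReflTransGen.trans stepA (hE ▸ stepB)
          · by_cases hu1 : u = i1
            · -- case 4 : entry on row i1, j0 < v < j1
              have hmuv : 0 < m i1 v := by rwa [hu1] at hmuv
              have hv1' : j0 < v := by omega
              have hv2 : v < j1 := by omega
              have stepA : MoveLE q r m (moveMat m i0 j0 i1 v) :=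
                ih m i0 j0 i1 v (by omega) h1 hii h2 h3 hv1' (by omega) h00 hmuv
              have pAB : 0 < moveMat m i0 j0 i1 v i0 v := by
                rw [moveMat_plus_ad m i0 j0 i1 v (by omega) (by omega)]; omega
              have pCD : 0 < moveMat m i0 j0 i1 v i1 j1 := by
                rw [moveMat_ne m i0 j0 i1 v i1 j1 (by omega) (by omega) (by omega) (by omega)]
                exact h11
              have stepB : MoveLE q r (moveMat m i0 j0 i1 v)
                  (moveMat (moveMat m i0 j0 i1 v) i0 v i1 j1) :=
                ih _ i0 v i1 j1 (by omega) h1 hii h2 (by omega) hv2 h4 pAB pCD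
              have hE : moveMat (moveMat m i0 j0 i1 v) i0 v i1 j1 = moveMat m i0 j0 i1 j1 := by
                apply castF_inj
                rw [castF_moveMat _ (by omega : i0 ≠ i1) (by omega : v ≠ j1) pAB pCD,
                  castF_moveMat m (by omega : i0 ≠ i1) (by omega : j0 ≠ v) h00 hmuv,
                  castF_moveMat m (by omega : i0 ≠ i1) (by omega : j0 ≠ j1) h00 h11]
                abel
              exact Relation.ReflTransGen.trans stepA (hE ▸ stepB)
            · -- case 5 : strict interior
              have hu1' : i0 < u := by omega
              have hu2 : u < i1 := by omega
              have hv1' : j0 < v := by omega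
              have hv2 : v < j1 := by omega
              have stepA : MoveLE q r m (moveMat m u v i1 j1) :=
                ih m u v i1 j1 (by omega) (by omega) hu2 h2 (by omega) hv2 h4 hmuv h11
              set M1 := moveMat m u v i1 j1 with hM1
              have pAB : 0 < M1 i0 j0 := by
                rw [hM1, moveMat_ne m u v i1 j1 i0 j0 (by omega) (by omega) (by omega) (by omega)]
                exact h00
              have pCD : 0 < M1 u j1 := by
                rw [hM1, moveMat_plus_ad m u v i1 j1 (by omega) (by omega)]; omega
              have stepB : MoveLE q r M1 (moveMat M1 i0 j0 u j1) :=
                ih M1 i0 j0 u j1 (by omega) h1 hu1' (by omega) h3 hjj h4 pAB pCD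
              set M2 := moveMat M1 i0 j0 u j1 with hM2
              have pAB2 : 0 < M2 u j0 := by
                rw [hM2, moveMat_plus_cb M1 i0 j0 u j1 (by omega) (by omega)]; omega
              have pCD2 : 0 < M2 i1 v := by
                rw [hM2, moveMat_ne M1 i0 j0 u j1 i1 v (by omega) (by omega) (by omega) (by omega),
                  hM1, moveMat_plus_cb m u v i1 j1 (by omega) (by omega)]
                omega
              have stepC : MoveLE q r M2 (moveMat M2 u j0 i1 v) :=
                ih M2 u j0 i1 v (by omega) (by omega) hu2 h2 h3 hv1' (by omega) pAB2 pCD2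
              have hE : moveMat M2 u j0 i1 v = moveMat m i0 j0 i1 j1 := by
                apply castF_inj
                rw [castF_moveMat _ (by omega : u ≠ i1) (by omega : j0 ≠ v) pAB2 pCD2, hM2,
                  castF_moveMat _ (by omega : i0 ≠ u) (by omega : j0 ≠ j1) pAB pCD, hM1,
                  castF_moveMat m (by omega : u ≠ i1) (by omega : v ≠ j1) hmuv h11,
                  castF_moveMat m (by omega : i0 ≠ i1) (by omega : j0 ≠ j1) h00 h11]
                abel
              exact Relation.ReflTransGen.trans stepA
                (Relation.ReflTransGen.trans stepB (hE ▸ stepC))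

lemma exists_transfer {q r : ℕ} {b c : ℕ → ℕ} {m m' : ℕ → ℕ → ℕ}
    (hm : IsTransport q r b c m) (hm' : IsTransport q r b c m')
    (hle : RkLE q r m m')
    (hne : ∃ x, x ≤ q ∧ ∃ y, y ≤ r ∧ rk m' x y < rk m x y) :
    ∃ i0 j0 i1 j1 : ℕ, 1 ≤ i0 ∧ i0 < i1 ∧ i1 ≤ q ∧ 1 ≤ j0 ∧ j0 < j1 ∧ j1 ≤ r ∧
      0 < m i0 j0 ∧ 0 < m i1 j1 ∧
      (∀ i j : ℕ, i0 ≤ i → i < i1 → j0 ≤ j → j < j1 → rk m' i j < rk m i j) := by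
  classical
  have hg := rkLE_global hm hm' hle
  obtain ⟨x, hx, y, hy, hxy⟩ := hne
  have hex : ∃ i, ∃ j, rk m' i j < rk m i j := ⟨x, y, hxy⟩
  set a := Nat.find hex with ha
  have haP : ∃ j, rk m' a j < rk m a j := Nat.find_spec hex
  set bb := Nat.find haP with hbb
  have hab : rk m' a bb < rk m a bb := Nat.find_spec haP
  have hminA : ∀ i, i < a → ∀ j, ¬ (rk m' i j < rk m i j) := by
    intro i hi j h; exact Nat.find_min hex hi ⟨j, h⟩
  have hminB : ∀ j, j < bb → ¬ (rk m' a j < rk m a j) := fun j hj => Nat.find_min haP hj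
  have heqA : ∀ i, i < a → ∀ j, rk m i j = rk m' i j := fun i hi j =>
    le_antisymm (not_lt.mp (hminA i hi j)) (hg i j)
  have heqB : ∀ j, j < bb → rk m a j = rk m' a j := fun j hj =>
    le_antisymm (not_lt.mp (hminB j hj)) (hg a j)
  have ha1 : 1 ≤ a := by
    by_contra h
    have h0 : a = 0 := by omega
    rw [h0, rk_zero_left, rk_zero_left] at hab; omega
  have hb1 : 1 ≤ bb := by
    by_contra h
    have h0 : bb = 0 := by omega
    rw [h0, rk_zero_right, rk_zero_right] at hab; omega
  have haq : a < q := by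
    by_contra h
    rw [rk_boundary_eq hm hm' a bb (Or.inl (by omega))] at hab; omega
  have hbr : bb < r := by
    by_contra h
    rw [rk_boundary_eq hm hm' a bb (Or.inr (by omega))] at hab; omega
  have hma : 0 < m a bb := by
    have h1 := rk_entry m ha1 hb1
    have h2 := rk_entry m' ha1 hb1
    have e1 := heqA (a-1) (by omega) bb
    have e2 := heqA (a-1) (by omega) (bb-1)
    have e3 := heqB (bb-1) (by omega)
    omega
  set T : Finset (ℕ × ℕ) := (Finset.Icc (a+1) q ×ˢ Finset.Icc (bb+1) r).filter
      (fun p => ∀ k ∈ Finset.Ico a p.1, ∀ l ∈ Finset.Ico bb p.2, rk m' k l < rk m k l)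
    with hT
  have hTmem : ∀ p : ℕ × ℕ, p ∈ T ↔
      (a+1 ≤ p.1 ∧ p.1 ≤ q ∧ bb+1 ≤ p.2 ∧ p.2 ≤ r ∧
        ∀ k l : ℕ, a ≤ k → k < p.1 → bb ≤ l → l < p.2 → rk m' k l < rk m k l) := by
    intro p
    rw [hT]
    simp only [Finset.mem_filter, Finset.mem_product, Finset.mem_Icc, Finset.mem_Ico]
    constructor
    · rintro ⟨⟨⟨u1, u2⟩, u3, u4⟩, u5⟩
      exact ⟨u1, u2, u3, u4, fun k l hk1 hk2 hl1 hl2 => u5 k ⟨hk1, hk2⟩ l ⟨hl1, hl2⟩⟩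
    · rintro ⟨u1, u2, u3, u4, u5⟩
      exact ⟨⟨⟨u1, u2⟩, u3, u4⟩, fun k hk l hl => u5 k l hk.1 hk.2 hl.1 hl.2⟩
  have hT0 : ((a+1, bb+1) : ℕ × ℕ) ∈ T := by
    rw [hTmem]
    refine ⟨le_refl _, by omega, le_refl _, by omega, ?_⟩
    intro k l hk1 hk2 hl1 hl2
    have : k = a := by omega
    have hl : l = bb := by omega
    rw [this, hl]; exact hab
  have key : ∃ p ∈ T, 0 < m p.1 p.2 := by
    by_contra hz
    push_neg at hz
    obtain ⟨p, hpT, hpmax⟩ := Finset.exists_max_image T (fun p => p.1 + p.2) ⟨_, hT0⟩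
    obtain ⟨i, j⟩ := p
    rw [hTmem] at hpT
    obtain ⟨hi1, hiq, hj1, hjr, hD⟩ := hpT
    simp only at hi1 hiq hj1 hjr hD
    have hj' : ∃ j', bb ≤ j' ∧ j' < j ∧ rk m i j' = rk m' i j' := by
      by_cases hiq' : i = q
      · refine ⟨bb, le_refl _, by omega, ?_⟩
        rw [hiq']; exact rk_boundary_eq hm hm' q bb (Or.inl (le_refl q))
      · have hnot : ((i+1, j) : ℕ × ℕ) ∉ T := by
          intro hmem
          have := hpmax _ hmem
          simp only at this; omega
        rw [hTmem] at hnot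
        push_neg at hnot
        obtain ⟨k, l, hk1, hk2, hl1, hl2, hkl⟩ :=
          hnot (by omega) (by simp only; omega) (by simp only; omega) (by simp only; omega)
        have hki : k = i := by
          by_contra hkne
          have := hD k l hk1 (by omega) hl1 hl2
          omega
        rw [hki] at hkl
        exact ⟨l, hl1, by omega, le_antisymm hkl (hg i l)⟩
    have hi' : ∃ i', a ≤ i' ∧ i' < i ∧ rk m i' j = rk m' i' j := by
      by_cases hjr' : j = r
      · refine ⟨a, le_refl _, by omega, ?_⟩
        rw [hjr']; exact rk_boundary_eq hm hm' a r (Or.inr (le_refl r))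
      · have hnot : ((i, j+1) : ℕ × ℕ) ∉ T := by
          intro hmem
          have := hpmax _ hmem
          simp only at this; omega
        rw [hTmem] at hnot
        push_neg at hnot
        obtain ⟨k, l, hk1, hk2, hl1, hl2, hkl⟩ :=
          hnot (by simp only; omega) (by simp only; omega) (by simp only; omega) (by simp only; omega)
        have hlj : l = j := by
          by_contra hlne
          have := hD k l hk1 hk2 hl1 (by omega)
          omega
        rw [hlj] at hkl
        exact ⟨k, hk1, by omega, le_antisymm hkl (hg k j)⟩
    obtain ⟨j', hj'1, hj'2, hj'eq⟩ := hj'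
    obtain ⟨i', hi'1, hi'2, hi'eq⟩ := hi'
    have hD' : rk m' i' j' < rk m i' j' := hD i' j' hi'1 hi'2 hj'1 hj'2
    have hrm := rk_rect m (show i' ≤ i by omega) (show j' ≤ j by omega)
    have hrm' := rk_rect m' (show i' ≤ i by omega) (show j' ≤ j by omega)
    have hgij := hg i j
    have hpos : ∑ k ∈ Finset.Ioc i' i, ∑ l ∈ Finset.Ioc j' j, m k l ≠ 0 := by omega
    obtain ⟨k, hk, hk0⟩ := Finset.exists_ne_zero_of_sum_ne_zero hpos
    obtain ⟨l, hl, hl0⟩ := Finset.exists_ne_zero_of_sum_ne_zero hk0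
    simp only [Finset.mem_Ioc] at hk hl
    have hklT : ((k, l) : ℕ × ℕ) ∈ T := by
      rw [hTmem]
      refine ⟨by omega, by omega, by omega, by omega, ?_⟩
      intro k' l' hk'1 hk'2 hl'1 hl'2
      exact hD k' l' hk'1 (by omega) hl'1 (by omega)
    exact hl0 (Nat.le_zero.mp (hz _ hklT))
  obtain ⟨⟨i1, j1⟩, hpT, hpos⟩ := key
  rw [hTmem] at hpT
  obtain ⟨h1, h2, h3, h4, h5⟩ := hpT
  simp only at h1 h2 h3 h4 h5 hpos
  exact ⟨a, bb, i1, j1, ha1, by omega, h2, hb1, by omega, h4, hma, hpos,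
    fun i j u1 u2 u3 u4 => h5 i j u1 u2 u3 u4⟩

lemma rkLE_moveLE {q r : ℕ} {b c : ℕ → ℕ} {m m' : ℕ → ℕ → ℕ}
    (hm : IsTransport q r b c m) (hm' : IsTransport q r b c m')
    (hle : RkLE q r m m') : MoveLE q r m m' := by
  classical
  have main : ∀ N : ℕ, ∀ mm : ℕ → ℕ → ℕ, IsTransport q r b c mm → RkLE q r mm m' →
      (∑ p ∈ Finset.Icc 1 q ×ˢ Finset.Icc 1 r, rk mm p.1 p.2) ≤ N → MoveLE q r mm m' := by
    intro N
    induction N with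
    | zero =>
      intro mm hmm hlemm hW
      -- all rank numbers of mm vanish, so equality holds
      have heq : ∀ i ≤ q, ∀ j ≤ r, rk mm i j = rk m' i j := by
        intro i hi j hj
        rcases Nat.eq_zero_or_pos i with h0 | hip
        · rw [h0, rk_zero_left, rk_zero_left]
        rcases Nat.eq_zero_or_pos j with h0 | hjp
        · rw [h0, rk_zero_right, rk_zero_right]
        have hmem : ((i, j) : ℕ × ℕ) ∈ Finset.Icc 1 q ×ˢ Finset.Icc 1 r := by
          simp [Finset.mem_product, Finset.mem_Icc]; omega
        have : rk mm i j = 0 := by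
          have := Finset.sum_le_sum_of_subset (Finset.singleton_subset_iff.mpr hmem)
            (f := fun p : ℕ × ℕ => rk mm p.1 p.2)
          simp at this
          omega
        have h2 := hlemm i hi j hj
        omega
      rw [eq_of_rk_eq hmm hm' heq]
      exact Relation.ReflTransGen.refl
    | succ N ih =>
      intro mm hmm hlemm hW
      by_cases heq : ∀ i ≤ q, ∀ j ≤ r, rk mm i j = rk m' i j
      · rw [eq_of_rk_eq hmm hm' heq]
        exact Relation.ReflTransGen.refl
      · push_neg at heq
        obtain ⟨i, hi, j, hj, hne⟩ := heq
        have hstr : rk m' i j < rk mm i j := lt_of_le_of_ne (hlemm i hi j hj) (Ne.symm hne)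
        obtain ⟨i0, j0, i1, j1, g1, g2, g3, g4, g5, g6, g7, g8, g9⟩ :=
          exists_transfer hmm hm' hlemm ⟨i, hi, j, hj, hstr⟩
        have hmv : MoveLE q r mm (moveMat mm i0 j0 i1 j1) :=
          transfer_moveLE q r (i1 - i0 + (j1 - j0)) mm i0 j0 i1 j1 le_rfl g1 g2 g3 g4 g5 g6 g7 g8
        have hm1 : IsTransport q r b c (moveMat mm i0 j0 i1 j1) :=
          isTransport_moveMat hmm g2 g5 g1 g4 g3 g6 g7 g8
        have hle1 : RkLE q r (moveMat mm i0 j0 i1 j1) m' := by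
          intro x hx y hy
          have E := rk_moveMat mm g2 g5 g1 g4 g7 g8 x y
          have hreg := g9 x y
          have hglob := hlemm x hx y hy
          split_ifs at E <;> omega
        have hWlt : (∑ p ∈ Finset.Icc 1 q ×ˢ Finset.Icc 1 r,
            rk (moveMat mm i0 j0 i1 j1) p.1 p.2)
            < ∑ p ∈ Finset.Icc 1 q ×ˢ Finset.Icc 1 r, rk mm p.1 p.2 := by
          refine Finset.sum_lt_sum (fun p _ => rk_moveMat_le mm g2 g5 g1 g4 g7 g8 p.1 p.2) ?_
          refine ⟨(i0, j0), by simp [Finset.mem_product, Finset.mem_Icc]; omega, ?_⟩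
          show rk (moveMat mm i0 j0 i1 j1) i0 j0 < rk mm i0 j0
          have E := rk_moveMat mm g2 g5 g1 g4 g7 g8 i0 j0
          have hreg := g9 i0 j0 le_rfl g2 le_rfl g5
          split_ifs at E <;> omega
        exact Relation.ReflTransGen.trans hmv
          (ih (moveMat mm i0 j0 i1 j1) hm1 hle1 (by omega))
  exact main _ m hm hle le_rfl

/-- for transport matrices, the rank order and the move order coincide. -/
theorem rkLE_iff_moveLE (n q r : ℕ) (hn : 0 < n) (hq : 0 < q) (hr : 0 < r)
    (b c : ℕ → ℕ) (hb : IsComposition n q b) (hc : IsComposition n r c)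
    (m m' : ℕ → ℕ → ℕ) (hm : IsTransport q r b c m) (hm' : IsTransport q r b c m') :
    RkLE q r m m' ↔ MoveLE q r m m' := by
  constructor
  · intro h
    exact rkLE_moveLE hm hm' h
  · intro h
    exact moveLE_rkLE h

end TwoFlagsLine
end
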